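/- (Theorem 1: dynamic regret of inexact online gradient descent under quadratic growth, deterministic errors.) Let A : ℝⁿ → ℝᵐ be a nonzero linear map with χ := σ_min/σ_max. For k = 1, …, K let f_k : ℝⁿ → ℝ be convex and differentiable with L-Lipschitz gradient, with minimizer set X_k* = {x : A x = u_k*} (u_k* in the range of A), ∇f_k vanishing on X_k*, and quadratic growth f_k(x) − f_k* ≥ (μ/2) dist(x, X_k*)², μ > 0. Fix ν ≥ 0, α > 0 with αL(1+ν)² < 1; set ℓ² := 1 − μα(1 − αL(1+ν)²) + 2ναL, assume 0 < ℓ < χ, and ζ := α(1+αL)/ℓ. Let x_1 ∈ ℝⁿ and x_{k+1} = x_k − α(∇f_k(x_k) + e_k) with errors ‖e_k‖ ≤ ε_k + ν‖∇f_k(x_k)‖, ε_k ≤ ε. Suppose there exist x_k* ∈ X_k* with ‖x_{k+1}* − x_k*‖ ≤ σ_v for all k; set W_K := Σ_{k=2}^K ‖x_k* − x_{k−1}*‖ and E_K := Σ_{k=1}^K ε_k. Then Σ_{k=1}^K (f_k(x_k) − f_k(x_k*)) ≤ [L(ζε + σ_v)/(χ − ℓ) + L·dist(x_1, X_1*)]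 · (‖x_1 − x_1*‖ + W_K + ζ E_K)/(χ − ℓ). -/

import Mathlib

open scoped RealInnerProductSpace
open Metric Set

variable {H : Type*} [NormedAddCommGroup H] [InnerProductSpace ℝ H] [CompleteSpace H]

lemma lineDeriv_aux (f : H → ℝ) (hd : Differentiable ℝ f) (a v : H) (t : ℝ) :
    HasDerivAt (fun s : ℝ => f (a + s • v)) ⟪gradient f (a + t • v), v⟫ t := by
  have hγ : HasDerivAt (fun s : ℝ => a + s • v) v t := by
    simpa using ((hasDerivAt_id t).smul_const v).const_add a
  have h1 : HasFDerivAt f (InnerProductSpace.toDual ℝ H (gradient f (a + t • v))) (a + t • v) := by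
    exact hasGradientAt_iff_hasFDerivAt.mp (hd (a + t • v)).hasGradientAt
  exact (h1.comp_hasDerivAt t hγ).congr_deriv (by simp)

lemma line_convex_aux {f : H → ℝ} (hc : ConvexOn ℝ Set.univ f) (a v : H) :
    ConvexOn ℝ Set.univ (fun s : ℝ => f (a + s • v)) := by
  refine ⟨convex_univ, ?_⟩
  intro p _ q _ lp lq hl0 hl1 hsum
  have key : a + (lp * p + lq * q) • v = lp • (a + p • v) + lq • (a + q • v) := by
    nth_rewrite 1 [show a = lp • a + lq • a by rw [← add_smul, hsum, one_smul]]
    module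
  have := hc.2 (mem_univ (a + p • v)) (mem_univ (a + q • v)) hl0 hl1 hsum
  simpa [smul_eq_mul, key] using this

/-- Convexity gradient inequality. -/
lemma convex_grad_ineq {f : H → ℝ} (hc : ConvexOn ℝ Set.univ f)
    (hd : Differentiable ℝ f) (a b : H) :
    f a + ⟪gradient f a, b - a⟫ ≤ f b := by
  have hs := (line_convex_aux hc a (b - a)).le_slope_of_hasDerivAt (mem_univ (0 : ℝ))
    (mem_univ (1 : ℝ)) one_pos (lineDeriv_aux f hd a (b - a) 0)
  rw [slope_def_field] at hs
  simp only [zero_smul, add_zero, one_smul, add_sub_cancel] at hs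
  norm_num at hs
  have hg : ⟪gradient f a, b - a⟫ = fderiv ℝ f a b - fderiv ℝ f a a := by
    rw [gradient, InnerProductSpace.toDual_symm_apply, map_sub]
  linarith

/-- Descent lemma for L-Lipschitz gradient. -/
lemma descent_lemma {f : H → ℝ} (hd : Differentiable ℝ f) {L : ℝ} (hL : 0 < L)
    (hLip : ∀ u v : H, ‖gradient f u - gradient f v‖ ≤ L * ‖u - v‖) (a b : H) :
    f b ≤ f a + ⟪gradient f a, b - a⟫ + L / 2 * ‖b - a‖ ^ 2 := by
  set v := b - a with hv
  set G : ℝ → ℝ := fun t => ⟪gradient f (a + t • v), v⟫ with hG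
  have hgradcont : Continuous (gradient f) := by
    refine LipschitzWith.continuous (K := L.toNNReal) ?_
    refine LipschitzWith.of_dist_le_mul fun u w => ?_
    rw [dist_eq_norm, dist_eq_norm]
    calc ‖gradient f u - gradient f w‖ ≤ L * ‖u - w‖ := hLip u w
    _ = (L.toNNReal : ℝ) * ‖u - w‖ := by rw [Real.coe_toNNReal L hL.le]
  have hGcont : Continuous G := by
    apply Continuous.inner
    · exact hgradcont.comp (continuous_const.add (continuous_id.smul continuous_const))
    · exact continuous_const
  have hftc : f b - f a = ∫ t in (0:ℝ)..1, G t := by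
    have := intervalIntegral.integral_eq_sub_of_hasDerivAt
      (f := fun s : ℝ => f (a + s • v)) (f' := G)
      (fun t _ => lineDeriv_aux f hd a v t) (hGcont.intervalIntegrable 0 1)
    simpa [hv] using this.symm
  have hbound : ∫ t in (0:ℝ)..1, G t ≤ ∫ t in (0:ℝ)..1, (G 0 + L * ‖v‖ ^ 2 * t) := by
    apply intervalIntegral.integral_mono_on zero_le_one (hGcont.intervalIntegrable 0 1)
    · exact ((continuous_const.add (continuous_const.mul continuous_id)).intervalIntegrable 0 1)
    · intro t ht
      have h1 : G t - G 0 = ⟪gradient f (a + t • v) - gradient f a, v⟫ := by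
        simp [hG, inner_sub_left]
      have h2 : ⟪gradient f (a + t • v) - gradient f a, v⟫ ≤ L * t * ‖v‖ ^ 2 := by
        calc ⟪gradient f (a + t • v) - gradient f a, v⟫
            ≤ ‖gradient f (a + t • v) - gradient f a‖ * ‖v‖ := real_inner_le_norm _ _
          _ ≤ (L * ‖(a + t • v) - a‖) * ‖v‖ := by
              have := hLip (a + t • v) a
              have hvn : (0:ℝ) ≤ ‖v‖ := norm_nonneg v
              nlinarith [this]
          _ = L * t * ‖v‖ ^ 2 := by
              rw [add_sub_cancel_left, norm_smul]
              simp [abs_of_nonneg ht.1]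
              ring
      nlinarith [h1, h2]
  have hint : ∫ t in (0:ℝ)..1, (G 0 + L * ‖v‖ ^ 2 * t) = G 0 + L / 2 * ‖v‖ ^ 2 := by
    rw [intervalIntegral.integral_add (intervalIntegrable_const)
      ((by fun_prop : Continuous fun t : ℝ => L * ‖v‖ ^ 2 * t).intervalIntegrable 0 1)]
    rw [intervalIntegral.integral_const_mul, integral_id]
    simp
    ring
  have hG0 : G 0 = ⟪gradient f a, v⟫ := by simp [hG]
  rw [hint, hG0] at hbound
  linarith [hftc, hbound]

/-- Lower bound on residual by distance to solution set. -/
lemma dist_lower_aux {F' : Type*} [NormedAddCommGroup F'] [InnerProductSpace ℝ F']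
    [FiniteDimensional ℝ H]
    (A : H →L[ℝ] F') {σmin : ℝ} (hσ0 : 0 ≤ σmin)
    (hmin : ∀ v ∈ (LinearMap.ker (A : H →ₗ[ℝ] F'))ᗮ, σmin * ‖v‖ ≤ ‖A v‖)
    (u : F') {xb : H} (hxb : A xb = u) (x : H) :
    σmin * Metric.infDist x {z | A z = u} ≤ ‖A x - u‖ := by
  set Kk := LinearMap.ker (A : H →ₗ[ℝ] F') with hKk
  set w := x - xb with hw
  set p := ((Kk.orthogonalProjection w : Kk) : H) with hp
  have hpmem : p ∈ Kk := SetLike.coe_mem _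
  have hwp : w - p ∈ Kkᗮ := Kk.sub_starProjection_mem_orthogonal w
  have hAp : A p = 0 := hpmem
  have hmem : (xb + p) ∈ {z | A z = u} := by
    show A (xb + p) = u
    rw [map_add, hxb, hAp, add_zero]
  have h1 : Metric.infDist x {z | A z = u} ≤ ‖w - p‖ := by
    have h := Metric.infDist_le_dist_of_mem (x := x) hmem
    rw [dist_eq_norm] at h
    have : x - (xb + p) = w - p := by rw [hw]; abel
    rwa [this] at h
  have h2 : σmin * ‖w - p‖ ≤ ‖A (w - p)‖ := hmin _ hwp
  have h3 : A (w - p) = A x - u := by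
    rw [map_sub, map_sub, hxb, hAp, sub_zero]
  calc σmin * Metric.infDist x {z | A z = u} ≤ σmin * ‖w - p‖ :=
        mul_le_mul_of_nonneg_left h1 hσ0
    _ ≤ ‖A (w - p)‖ := h2
    _ = ‖A x - u‖ := by rw [h3]

set_option maxHeartbeats 1000000 in
/-- Purely scalar core of the one-step analysis. -/
lemma onestep_scalar {L μ α ν ℓ εk dk G Fv I a : ℝ}
    (hL : 0 < L) (hμ : 0 < μ) (hα : 0 < α) (hν : 0 ≤ ν)
    (hstep : α * L * (1 + ν) ^ 2 < 1)
    (hℓpos : 0 < ℓ) (hℓsq : ℓ ^ 2 = 1 - μ * α * (1 - α * L * (1 + ν) ^ 2) + 2 * ν * α * L)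
    (hdk0 : 0 ≤ dk) (hG0 : 0 ≤ G) (ha0 : 0 ≤ a)
    (hQG' : μ / 2 * dk ^ 2 ≤ Fv)
    (h1 : Fv ≤ I)
    (h3 : G ^ 2 ≤ 2 * L * Fv)
    (hG : G ≤ L * dk)
    (ha2 : a ^ 2 = dk ^ 2 - 2 * α * I + α ^ 2 * G ^ 2) :
    a + α * ν * G ≤ ℓ * dk := by
  have hI2 : α * (1 - α * L * (1 + ν) ^ 2) * μ * dk ^ 2 + α ^ 2 * (1 + ν) ^ 2 * G ^ 2
      ≤ 2 * α * I := by
    have hA1 : 0 ≤ α * (1 - α * L * (1 + ν) ^ 2) * (2 * Fv - μ * dk ^ 2) := by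
      apply mul_nonneg (mul_nonneg hα.le (by linarith)) (by linarith [hQG'])
    have hA2 : 0 ≤ α ^ 2 * (1 + ν) ^ 2 * (2 * L * Fv - G ^ 2) := by
      apply mul_nonneg (by positivity) (by linarith [h3])
    have hA3 : 0 ≤ 2 * α * (I - Fv) := by
      apply mul_nonneg (by linarith) (by linarith [h1])
    linarith only [hA1, hA2, hA3]
  have ha2' : a ^ 2 ≤ (1 - α * μ * (1 - α * L * (1 + ν) ^ 2)) * dk ^ 2
      + α ^ 2 * G ^ 2 * (1 - (1 + ν) ^ 2) := by linarith only [ha2, hI2]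
  have h1s : (0:ℝ) ≤ 1 - α * L * (1 + ν) ^ 2 := by linarith
  have hν1 : (1:ℝ) ≤ (1 + ν) ^ 2 := by nlinarith [hν]
  have hB1 : (0:ℝ) ≤ α * μ * (1 - α * L * (1 + ν) ^ 2) * dk ^ 2 :=
    mul_nonneg (mul_nonneg (mul_nonneg hα.le hμ.le) h1s) (sq_nonneg dk)
  have hB2 : (0:ℝ) ≤ α ^ 2 * G ^ 2 * ((1 + ν) ^ 2 - 1) :=
    mul_nonneg (mul_nonneg (sq_nonneg α) (sq_nonneg G)) (by linarith)
  have hadk : a ≤ dk := by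
    have hsq : a ^ 2 ≤ dk ^ 2 := by linarith only [ha2', hB1, hB2]
    nlinarith [hsq, ha0, hdk0]
  have hr : (ℓ * dk) ^ 2 = (1 - μ * α * (1 - α * L * (1 + ν) ^ 2) + 2 * ν * α * L) * dk ^ 2 := by
    rw [mul_pow, hℓsq]
  have h6 : α * ν * (dk * G) ≤ α * ν * (L * dk ^ 2) := by
    apply mul_le_mul_of_nonneg_left _ (by positivity)
    nlinarith [hG, hdk0]
  have h7 : a * (α * ν * G) ≤ dk * (α * ν * G) :=
    mul_le_mul_of_nonneg_right hadk (by positivity)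
  have hnn : (0:ℝ) ≤ α ^ 2 * ν * G ^ 2 := by positivity
  have hexp : (a + α * ν * G) ^ 2 = a ^ 2 + 2 * (a * (α * ν * G)) + α ^ 2 * ν ^ 2 * G ^ 2 := by
    ring
  have h5 : (a + α * ν * G) ^ 2 ≤ (ℓ * dk) ^ 2 := by
    linarith only [hexp, ha2', h7, h6, hr, hnn]
  have hab0 : 0 ≤ a + α * ν * G := by positivity
  have hld : 0 ≤ ℓ * dk := by positivity
  nlinarith [h5, hab0, hld]

/-- One step of inexact gradient descent contracts distance to the minimizer. -/
lemma onestep_aux {f : H → ℝ} (hc : ConvexOn ℝ Set.univ f) (hd : Differentiable ℝ f)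
    {L μ α ν ℓ εk : ℝ} (hL : 0 < L) (hμ : 0 < μ) (hα : 0 < α) (hν : 0 ≤ ν) (hεk : 0 ≤ εk)
    (hLip : ∀ u v : H, ‖gradient f u - gradient f v‖ ≤ L * ‖u - v‖)
    (hstep : α * L * (1 + ν) ^ 2 < 1)
    (hℓpos : 0 < ℓ) (hℓsq : ℓ ^ 2 = 1 - μ * α * (1 - α * L * (1 + ν) ^ 2) + 2 * ν * α * L)
    (x e yb : H)
    (hmin : ∀ y, f yb ≤ f y)
    (hQG' : μ / 2 * ‖x - yb‖ ^ 2 ≤ f x - f yb)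
    (hG : ‖gradient f x‖ ≤ L * ‖x - yb‖)
    (herr : ‖e‖ ≤ εk + ν * ‖gradient f x‖) :
    ‖x - α • (gradient f x + e) - yb‖ ≤ ℓ * ‖x - yb‖ + α * εk := by
  obtain ⟨g, hg⟩ : ∃ g', g' = gradient f x := ⟨_, rfl⟩
  rw [← hg] at hG herr ⊢
  -- convexity: f x - f yb ≤ ⟪g, x - yb⟫
  have h1 : f x - f yb ≤ ⟪g, x - yb⟫ := by
    have hcv := convex_grad_ineq hc hd x yb
    rw [← hg] at hcv
    have h' : ⟪g, yb - x⟫ = -⟪g, x - yb⟫ := by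
      rw [show yb - x = -(x - yb) by abel, inner_neg_right]
    rw [h'] at hcv
    linarith [hcv]
  -- smoothness: ‖g‖^2 ≤ 2 L (f x - f yb)
  have h3 : ‖g‖ ^ 2 ≤ 2 * L * (f x - f yb) := by
    have hdl := descent_lemma hd hL hLip x (x - (1 / L) • g)
    rw [← hg] at hdl
    have hsimp : ⟪g, (x - (1 / L) • g) - x⟫ = -(1 / L) * ‖g‖ ^ 2 := by
      rw [show (x - (1 / L) • g) - x = -((1 / L) • g) by abel, inner_neg_right,
        real_inner_smul_right, real_inner_self_eq_norm_sq]
      ring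
    have hnrm : ‖(x - (1 / L) • g) - x‖ ^ 2 = (1 / L) ^ 2 * ‖g‖ ^ 2 := by
      rw [show (x - (1 / L) • g) - x = -((1 / L) • g) by abel, norm_neg, norm_smul]
      rw [Real.norm_eq_abs, abs_of_pos (by positivity : (0:ℝ) < 1 / L)]
      ring
    rw [hsimp, hnrm] at hdl
    have hmin' := hmin (x - (1 / L) • g)
    have hc1 : -(1 / L) * ‖g‖ ^ 2 + L / 2 * ((1 / L) ^ 2 * ‖g‖ ^ 2)
        = -(1 / (2 * L) * ‖g‖ ^ 2) := by
      field_simp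
      ring
    have h10 : 1 / (2 * L) * ‖g‖ ^ 2 ≤ f x - f yb := by
      linarith only [hdl, hmin', hc1]
    have hmul := mul_le_mul_of_nonneg_left h10 (by positivity : (0:ℝ) ≤ 2 * L)
    have hid : 2 * L * (1 / (2 * L) * ‖g‖ ^ 2) = ‖g‖ ^ 2 := by field_simp
    linarith only [hmul, hid]
  have ha2 : ‖(x - yb) - α • g‖ ^ 2
      = ‖x - yb‖ ^ 2 - 2 * α * ⟪g, x - yb⟫ + α ^ 2 * ‖g‖ ^ 2 := by
    rw [norm_sub_sq_real, real_inner_smul_right, norm_smul, Real.norm_eq_abs,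
      abs_of_pos hα, real_inner_comm]
    ring
  have h8 : ‖(x - yb) - α • g‖ + α * ν * ‖g‖ ≤ ℓ * ‖x - yb‖ :=
    onestep_scalar (εk := εk) hL hμ hα hν hstep hℓpos hℓsq (norm_nonneg _)
      (norm_nonneg _) (norm_nonneg _) hQG' h1 h3 hG ha2
  have hvec : x - α • (g + e) - yb = ((x - yb) - α • g) - α • e := by
    rw [smul_add]; abel
  calc ‖x - α • (g + e) - yb‖ = ‖((x - yb) - α • g) - α • e‖ := by rw [hvec]
    _ ≤ ‖(x - yb) - α • g‖ + ‖α • e‖ := norm_sub_le _ _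
    _ = ‖(x - yb) - α • g‖ + α * ‖e‖ := by rw [norm_smul, Real.norm_eq_abs, abs_of_pos hα]
    _ ≤ ‖(x - yb) - α • g‖ + α * (εk + ν * ‖g‖) := by
        have := mul_le_mul_of_nonneg_left herr hα.le
        linarith
    _ = (‖(x - yb) - α • g‖ + α * ν * ‖g‖) + α * εk := by ring
    _ ≤ ℓ * ‖x - yb‖ + α * εk := by linarith only [h8]




set_option maxHeartbeats 1600000 in
/-- Theorem 1: dynamic regret of inexact online gradient descent under
quadratic growth, deterministic errors:
`Σ_{k=1}^K (f_k(x_k) − f_k(x_k*)) ≤ [L(ζε + σ_v)/(χ − ℓ) + L·dist(x_1, X_1*)] ·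
 (‖x_1 − x_1*‖ + W_K + ζ E_K)/(χ − ℓ)`. -/
theorem dynamic_regret_inexact_ogd_quadratic_growth {n m : ℕ} (K : ℕ)
    (A : EuclideanSpace ℝ (Fin n) →L[ℝ] EuclideanSpace ℝ (Fin m)) (hA : A ≠ 0)
    (σmin σmax χ : ℝ)
    (hσmin : σmin = sInf {c : ℝ | ∃ x : EuclideanSpace ℝ (Fin n),
      x ≠ 0 ∧ x ∈ (LinearMap.ker (A : EuclideanSpace ℝ (Fin n) →ₗ[ℝ] EuclideanSpace ℝ (Fin m)))ᗮ ∧ c = ‖A x‖ / ‖x‖})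
    (hσmax : σmax = ‖A‖) (hχ : χ = σmin / σmax)
    (f : ℕ → EuclideanSpace ℝ (Fin n) → ℝ)
    (hconv : ∀ k, ConvexOn ℝ Set.univ (f k)) (hdiff : ∀ k, Differentiable ℝ (f k))
    (L : ℝ) (hL : 0 < L)
    (hLip : ∀ k, ∀ u v : EuclideanSpace ℝ (Fin n),
      ‖gradient (f k) u - gradient (f k) v‖ ≤ L * ‖u - v‖)
    (ustar : ℕ → EuclideanSpace ℝ (Fin m)) (hrange : ∀ k, ustar k ∈ Set.range A)
    (Xstar : ℕ → Set (EuclideanSpace ℝ (Fin n)))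
    (hXstar : ∀ k, Xstar k = {x | A x = ustar k})
    (hXmin : ∀ k, Xstar k = {x | ∀ y : EuclideanSpace ℝ (Fin n), f k x ≤ f k y})
    (hgrad0 : ∀ k, ∀ y ∈ Xstar k, gradient (f k) y = 0)
    (fstar : ℕ → ℝ) (hfstar : ∀ k, ∀ x ∈ Xstar k, f k x = fstar k)
    (μ : ℝ) (hμ : 0 < μ)
    (hQG : ∀ k, ∀ x : EuclideanSpace ℝ (Fin n),
      μ / 2 * Metric.infDist x (Xstar k) ^ 2 ≤ f k x - fstar k)
    (ε : ℕ → ℝ) (hεnn : ∀ k, 0 ≤ ε k) (εbar : ℝ) (hεbar : ∀ k, ε k ≤ εbar)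
    (ν α : ℝ) (hν : 0 ≤ ν) (hα : 0 < α)
    (hstep : α * L * (1 + ν) ^ 2 < 1)
    (ℓ ζ : ℝ) (hℓpos : 0 < ℓ)
    (hℓsq : ℓ ^ 2 = 1 - μ * α * (1 - α * L * (1 + ν) ^ 2) + 2 * ν * α * L)
    (hℓχ : ℓ < χ) (hζ : ζ = α * (1 + α * L) / ℓ)
    (x e : ℕ → EuclideanSpace ℝ (Fin n))
    (hrec : ∀ k, 1 ≤ k → k ≤ K →
      x (k + 1) = x k - α • (gradient (f k) (x k) + e k))
    (herr : ∀ k, 1 ≤ k → k ≤ K → ‖e k‖ ≤ ε k + ν * ‖gradient (f k) (x k)‖)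
    (xstar : ℕ → EuclideanSpace ℝ (Fin n)) (hxstar : ∀ k, xstar k ∈ Xstar k)
    (σv : ℝ) (hσv : ∀ k, 1 ≤ k → ‖xstar (k + 1) - xstar k‖ ≤ σv)
    (W E : ℝ)
    (hW : W = ∑ k ∈ Finset.Icc 2 K, ‖xstar k - xstar (k - 1)‖)
    (hE : E = ∑ k ∈ Finset.Icc 1 K, ε k) :
    ∑ k ∈ Finset.Icc 1 K, (f k (x k) - f k (xstar k)) ≤
      (L * (ζ * εbar + σv) / (χ - ℓ) + L * Metric.infDist (x 1) (Xstar 1)) *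
        ((‖x 1 - xstar 1‖ + W + ζ * E) / (χ - ℓ)) := by
  -- basic positivity facts
  have hσmaxpos : 0 < σmax := by rw [hσmax]; exact norm_pos_iff.mpr hA
  have hχpos : 0 < χ := lt_trans hℓpos hℓχ
  have hσminχ : σmin = χ * σmax := by rw [hχ]; field_simp
  have hσminpos : 0 < σmin := by rw [hσminχ]; positivity
  have hχℓ : 0 < χ - ℓ := sub_pos.2 hℓχ
  -- the singular value set
  set Sset : Set ℝ := {c : ℝ | ∃ x : EuclideanSpace ℝ (Fin n),
      x ≠ 0 ∧ x ∈ (LinearMap.ker (A : EuclideanSpace ℝ (Fin n) →ₗ[ℝ] EuclideanSpace ℝ (Fin m)))ᗮ ∧ c = ‖A x‖ / ‖x‖} with hSset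
  have hbdd : BddBelow Sset := by
    refine ⟨0, fun c hc => ?_⟩
    obtain ⟨x0, _, _, rfl⟩ := hc
    positivity
  have hker : LinearMap.ker (A : EuclideanSpace ℝ (Fin n) →ₗ[ℝ] EuclideanSpace ℝ (Fin m)) ≠ ⊤ := by
    intro h
    apply hA
    ext1 z
    have hz : z ∈ LinearMap.ker (A : EuclideanSpace ℝ (Fin n) →ₗ[ℝ] EuclideanSpace ℝ (Fin m)) := by rw [h]; trivial
    simpa using hz
  have hSne : Sset.Nonempty := by
    have hbot : (LinearMap.ker (A : EuclideanSpace ℝ (Fin n) →ₗ[ℝ] EuclideanSpace ℝ (Fin m)))ᗮ ≠ ⊥ := by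
      rw [Ne, Submodule.orthogonal_eq_bot_iff (K := LinearMap.ker (A : EuclideanSpace ℝ (Fin n) →ₗ[ℝ] EuclideanSpace ℝ (Fin m)))]
      exact hker
    obtain ⟨x0, hx0mem, hx0⟩ := Submodule.ne_bot_iff _ |>.mp hbot
    exact ⟨‖A x0‖ / ‖x0‖, x0, hx0, hx0mem, rfl⟩
  have hmin : ∀ v ∈ (LinearMap.ker (A : EuclideanSpace ℝ (Fin n) →ₗ[ℝ] EuclideanSpace ℝ (Fin m)))ᗮ, σmin * ‖v‖ ≤ ‖A v‖ := by
    intro v hv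
    by_cases hv0 : v = 0
    · simp [hv0]
    · have hle : σmin ≤ ‖A v‖ / ‖v‖ := by
        rw [hσmin]; exact csInf_le hbdd ⟨v, hv0, hv, rfl⟩
      have hvn : 0 < ‖v‖ := norm_pos_iff.mpr hv0
      calc σmin * ‖v‖ ≤ (‖A v‖ / ‖v‖) * ‖v‖ := mul_le_mul_of_nonneg_right hle hvn.le
        _ = ‖A v‖ := div_mul_cancel₀ _ hvn.ne'
  have hχ1 : χ ≤ 1 := by
    obtain ⟨c, x0, hx00, _, rfl⟩ := hSne
    have h1 : σmin ≤ ‖A x0‖ / ‖x0‖ := by rw [hσmin]; exact csInf_le hbdd ⟨x0, hx00, ‹_›, rfl⟩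
    have hx0n : 0 < ‖x0‖ := norm_pos_iff.mpr hx00
    have h2 : ‖A x0‖ / ‖x0‖ ≤ σmax := by
      rw [div_le_iff₀ hx0n, hσmax]
      exact A.le_opNorm x0
    rw [hχ, div_le_one hσmaxpos]
    linarith
  have hℓ1 : ℓ ≤ 1 := le_trans hℓχ.le hχ1
  have εbar0 : 0 ≤ εbar := le_trans (hεnn 0) (hεbar 0)
  have σv0 : 0 ≤ σv := le_trans (norm_nonneg _) (hσv 1 le_rfl)
  have hζα : α ≤ ζ := by
    rw [hζ, le_div_iff₀ hℓpos]
    have h1 := mul_nonneg hα.le (sub_nonneg.2 hℓ1)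
    have h2 : (0:ℝ) ≤ α * α * L := by positivity
    nlinarith [h1, h2]
  have hζ0 : 0 ≤ ζ := le_trans hα.le hζα
  -- distance notation
  obtain ⟨d, hd⟩ : ∃ d : ℕ → ℝ, d = fun k => Metric.infDist (x k) (Xstar k) := ⟨_, rfl⟩
  have hdk : ∀ k, d k = Metric.infDist (x k) (Xstar k) := fun k => by rw [hd]
  have hd0 : ∀ k, 0 ≤ d k := fun k => by rw [hdk]; exact Metric.infDist_nonneg
  have hclosed : ∀ k, IsClosed (Xstar k) := by
    intro k; rw [hXstar k]
    exact isClosed_eq A.continuous continuous_const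
  have hXne : ∀ k, (Xstar k).Nonempty := fun k => ⟨xstar k, hxstar k⟩
  have hproj : ∀ k, ∃ y ∈ Xstar k, Metric.infDist (x k) (Xstar k) = dist (x k) y :=
    fun k => (hclosed k).exists_infDist_eq_dist (hXne k) (x k)
  have fmin : ∀ k, ∀ y ∈ Xstar k, ∀ z, f k y ≤ f k z := by
    intro k y hy z
    rw [hXmin k] at hy
    exact hy z
  have hAeq : ∀ k, ∀ y ∈ Xstar k, A y = ustar k := by
    intro k y hy; rwa [hXstar k] at hy
  -- value upper bound via smoothness
  have hfd : ∀ k, f k (x k) - fstar k ≤ L / 2 * (d k) ^ 2 := by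
    intro k
    obtain ⟨y, hy, hdy⟩ := hproj k
    have hdl := descent_lemma (hdiff k) hL (hLip k) y (x k)
    rw [hgrad0 k y hy, inner_zero_left, hfstar k y hy] at hdl
    have : ‖x k - y‖ = d k := by rw [hdk, hdy, dist_eq_norm]
    rw [this] at hdl
    linarith
  -- main recursion
  have hrec2 : ∀ k, 1 ≤ k → k ≤ K →
      χ * d (k + 1) ≤ ℓ * d k + α * ε k + ‖xstar (k + 1) - xstar k‖ := by
    intro k hk1 hkK
    obtain ⟨y, hy, hdy⟩ := hproj k
    have hnxy : ‖x k - y‖ = d k := by rw [hdk, hdy, dist_eq_norm]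
    have hgy : gradient (f k) y = 0 := hgrad0 k y hy
    have hQG' : μ / 2 * ‖x k - y‖ ^ 2 ≤ f k (x k) - f k y := by
      rw [hfstar k y hy, hnxy, hdk]
      exact hQG k (x k)
    have hGb : ‖gradient (f k) (x k)‖ ≤ L * ‖x k - y‖ := by
      have := hLip k (x k) y
      rwa [hgy, sub_zero] at this
    have hstep1 : ‖x (k + 1) - y‖ ≤ ℓ * ‖x k - y‖ + α * ε k := by
      rw [hrec k hk1 hkK]
      exact onestep_aux (hconv k) (hdiff k) hL hμ hα hν (hεnn k) (hLip k) hstep hℓpos hℓsq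
        (x k) (e k) y (fmin k y hy) hQG' hGb (herr k hk1 hkK)
    have hxk1 : A (xstar (k + 1)) = ustar (k + 1) := hAeq (k + 1) _ (hxstar (k + 1))
    have hlow : σmin * d (k + 1) ≤ ‖A (x (k + 1)) - ustar (k + 1)‖ := by
      have h := dist_lower_aux A hσminpos.le hmin (ustar (k + 1)) hxk1 (x (k + 1))
      rw [hdk, hXstar (k + 1)]
      exact h
    have htri : ‖A (x (k + 1)) - ustar (k + 1)‖
        ≤ ‖A (x (k + 1)) - ustar k‖ + ‖ustar k - ustar (k + 1)‖ :=
      norm_sub_le_norm_sub_add_norm_sub _ _ _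
    have h1 : ‖A (x (k + 1)) - ustar k‖ ≤ σmax * (ℓ * ‖x k - y‖ + α * ε k) := by
      have heq : A (x (k + 1)) - ustar k = A (x (k + 1) - y) := by
        rw [map_sub, hAeq k y hy]
      rw [heq]
      calc ‖A (x (k + 1) - y)‖ ≤ ‖A‖ * ‖x (k + 1) - y‖ := A.le_opNorm _
        _ ≤ σmax * (ℓ * ‖x k - y‖ + α * ε k) := by
            rw [hσmax]
            exact mul_le_mul_of_nonneg_left hstep1 (norm_nonneg _)
    have h2 : ‖ustar k - ustar (k + 1)‖ ≤ σmax * ‖xstar (k + 1) - xstar k‖ := by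
      have heq : ustar k - ustar (k + 1) = A (xstar k - xstar (k + 1)) := by
        rw [map_sub, hAeq k _ (hxstar k), hxk1]
      rw [heq]
      calc ‖A (xstar k - xstar (k + 1))‖ ≤ ‖A‖ * ‖xstar k - xstar (k + 1)‖ := A.le_opNorm _
        _ = σmax * ‖xstar (k + 1) - xstar k‖ := by rw [hσmax, norm_sub_rev]
    have hcomb : σmin * d (k + 1)
        ≤ σmax * (ℓ * d k + α * ε k + ‖xstar (k + 1) - xstar k‖) := by
      rw [← hnxy]
      calc σmin * d (k + 1) ≤ ‖A (x (k + 1)) - ustar (k + 1)‖ := hlow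
        _ ≤ ‖A (x (k + 1)) - ustar k‖ + ‖ustar k - ustar (k + 1)‖ := htri
        _ ≤ σmax * (ℓ * ‖x k - y‖ + α * ε k) + σmax * ‖xstar (k + 1) - xstar k‖ := by
            linarith [h1, h2]
        _ = σmax * (ℓ * ‖x k - y‖ + α * ε k + ‖xstar (k + 1) - xstar k‖) := by ring
    rw [hχ, div_mul_eq_mul_div, div_le_iff₀ hσmaxpos]
    calc σmin * d (k + 1) ≤ σmax * (ℓ * d k + α * ε k + ‖xstar (k + 1) - xstar k‖) := hcomb
      _ = (ℓ * d k + α * ε k + ‖xstar (k + 1) - xstar k‖) * σmax := by ring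
  -- uniform bound
  obtain ⟨B, hB⟩ : ∃ B : ℝ, B = d 1 + (α * εbar + σv) / (χ - ℓ) := ⟨_, rfl⟩
  have hq0 : 0 ≤ α * εbar + σv := add_nonneg (mul_nonneg hα.le εbar0) σv0
  have hB0 : d 1 ≤ B := by
    rw [hB]
    have : 0 ≤ (α * εbar + σv) / (χ - ℓ) := div_nonneg hq0 hχℓ.le
    linarith
  have hU : ∀ k, 1 ≤ k → k ≤ K → d k ≤ B := by
    intro k hk1
    induction k, hk1 using Nat.le_induction with
    | base => intro _; exact hB0
    | succ k hk ih =>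
      intro hk1K
      have hkK : k ≤ K := Nat.le_of_succ_le hk1K
      have hrk := hrec2 k hk hkK
      have hdkB := ih hkK
      have hs := hσv k hk
      have hε := hεbar k
      have h0 : χ * d (k + 1) ≤ ℓ * B + (α * εbar + σv) := by
        have hm1 := mul_le_mul_of_nonneg_left hdkB hℓpos.le
        have hm2 := mul_le_mul_of_nonneg_left hε hα.le
        linarith only [hrk, hm1, hm2, hs]
      have hBq : α * εbar + σv ≤ (χ - ℓ) * B := by
        have heq : (χ - ℓ) * B = (χ - ℓ) * d 1 + (α * εbar + σv) := by
          rw [hB]; field_simp [hχℓ.ne']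
        linarith [mul_nonneg hχℓ.le (hd0 1), heq]
      have h1 : ℓ * B + (α * εbar + σv) ≤ χ * B := by linarith
      have := le_trans h0 h1
      exact le_of_mul_le_mul_left this hχpos
  -- summed recursion
  have hQsum : ∀ N, N + 1 ≤ K →
      χ * (∑ k ∈ Finset.Icc 2 (N + 1), d k) ≤
        ℓ * (∑ k ∈ Finset.Icc 1 N, d k) + α * (∑ k ∈ Finset.Icc 1 N, ε k)
          + (∑ k ∈ Finset.Icc 2 (N + 1), ‖xstar k - xstar (k - 1)‖) := by
    intro N
    induction N with
    | zero =>
      intro _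
      rw [Finset.Icc_eq_empty (by omega), Finset.Icc_eq_empty (by omega)]
      simp
    | succ N ih =>
      intro hNK
      have hih := ih (by omega)
      have hrk := hrec2 (N + 1) (by omega) (by omega)
      rw [Finset.sum_Icc_succ_top (by omega : 2 ≤ N + 1 + 1),
        Finset.sum_Icc_succ_top (by omega : 1 ≤ N + 1),
        Finset.sum_Icc_succ_top (by omega : 1 ≤ N + 1),
        Finset.sum_Icc_succ_top (by omega : 2 ≤ N + 1 + 1)]
      simp only [Nat.add_sub_cancel]
      have hmul : χ * ((∑ k ∈ Finset.Icc 2 (N + 1), d k) + d (N + 1 + 1))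
          = χ * (∑ k ∈ Finset.Icc 2 (N + 1), d k) + χ * d (N + 1 + 1) := by ring
      rw [hmul]
      linarith [hih, hrk]
  -- total distance sum bound
  obtain ⟨T, hT⟩ : ∃ T : ℝ, T = ∑ k ∈ Finset.Icc 1 K, d k := ⟨_, rfl⟩
  have hT0 : 0 ≤ T := by
    rw [hT]; exact Finset.sum_nonneg fun k _ => hd0 k
  have hE0 : 0 ≤ E := by
    rw [hE]; exact Finset.sum_nonneg fun k _ => hεnn k
  have hW0 : 0 ≤ W := by
    rw [hW]; exact Finset.sum_nonneg fun k _ => norm_nonneg _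
  have hd1x : d 1 ≤ ‖x 1 - xstar 1‖ := by
    rw [hdk, ← dist_eq_norm]
    exact Metric.infDist_le_dist_of_mem (hxstar 1)
  have hTbound : (χ - ℓ) * T ≤ ‖x 1 - xstar 1‖ + W + ζ * E := by
    rcases Nat.eq_zero_or_pos K with hK0 | hKpos
    · subst hK0
      rw [hT, Finset.Icc_eq_empty (by omega)]
      simp only [Finset.sum_empty, mul_zero]
      have h9 := norm_nonneg (x 1 - xstar 1)
      linarith only [h9, hW0, mul_nonneg hζ0 hE0]
    · obtain ⟨N, rfl⟩ : ∃ N, K = N + 1 := ⟨K - 1, by omega⟩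
      have hsplit : T = d 1 + ∑ k ∈ Finset.Icc 2 (N + 1), d k := by
        rw [hT, Finset.Icc_eq_cons_Ioc (by omega : 1 ≤ N + 1), Finset.sum_cons,
          ← Finset.Icc_add_one_left_eq_Ioc]
        rfl
      have hq := hQsum N le_rfl
      have hsub1 : ∑ k ∈ Finset.Icc 1 N, d k ≤ T := by
        rw [hT]
        exact Finset.sum_le_sum_of_subset_of_nonneg
          (Finset.Icc_subset_Icc_right (by omega)) (fun k _ _ => hd0 k)
      have hsub2 : ∑ k ∈ Finset.Icc 1 N, ε k ≤ E := by
        rw [hE]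
        exact Finset.sum_le_sum_of_subset_of_nonneg
          (Finset.Icc_subset_Icc_right (by omega)) (fun k _ _ => hεnn k)
      have hWeq : ∑ k ∈ Finset.Icc 2 (N + 1), ‖xstar k - xstar (k - 1)‖ = W := hW.symm
      have hstep2 : χ * (T - d 1) ≤ ℓ * T + α * E + W := by
        have hm1 := mul_le_mul_of_nonneg_left hsub1 hℓpos.le
        have hm2 := mul_le_mul_of_nonneg_left hsub2 hα.le
        have : χ * (T - d 1) = χ * (∑ k ∈ Finset.Icc 2 (N + 1), d k) := by
          rw [hsplit]; ring
        rw [this]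
        rw [hWeq] at hq
        linarith
      have hχd1 : χ * d 1 ≤ d 1 := by
        nlinarith [hd0 1, hχ1, hχpos]
      have hαE : α * E ≤ ζ * E := mul_le_mul_of_nonneg_right hζα hE0
      linarith [hd1x, hstep2, hχd1, hαE]
  have hTle : T ≤ (‖x 1 - xstar 1‖ + W + ζ * E) / (χ - ℓ) := by
    rw [le_div_iff₀ hχℓ]
    linarith [hTbound]
  -- assemble final bound
  have hsum1 : ∑ k ∈ Finset.Icc 1 K, (f k (x k) - f k (xstar k))
      ≤ (L / 2 * B) * T := by
    rw [hT, Finset.mul_sum]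
    apply Finset.sum_le_sum
    intro k hk
    rw [Finset.mem_Icc] at hk
    have h1 : f k (xstar k) = fstar k := hfstar k _ (hxstar k)
    have h2 := hfd k
    have h3 := hU k hk.1 hk.2
    have h4 := hd0 k
    have h5 : d k * d k ≤ B * d k := mul_le_mul_of_nonneg_right h3 h4
    have h6 := mul_le_mul_of_nonneg_left h5 (by linarith : (0:ℝ) ≤ L / 2)
    have : L / 2 * d k ^ 2 ≤ L / 2 * B * d k := by nlinarith [h6]
    linarith [h2, this, h1.ge, h1.le]
  have hQ0 : 0 ≤ (ζ * εbar + σv) / (χ - ℓ) :=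
    div_nonneg (add_nonneg (mul_nonneg hζ0 εbar0) σv0) hχℓ.le
  have hPQ : (α * εbar + σv) / (χ - ℓ) ≤ (ζ * εbar + σv) / (χ - ℓ) := by
    apply (div_le_div_iff_of_pos_right hχℓ).mpr
    have := mul_le_mul_of_nonneg_right hζα εbar0
    linarith
  have hP0 : 0 ≤ (α * εbar + σv) / (χ - ℓ) := div_nonneg hq0 hχℓ.le
  have hMB : L / 2 * B ≤ L * (ζ * εbar + σv) / (χ - ℓ) + L * d 1 := by
    rw [hB, mul_div_assoc]
    have hL2 : (0:ℝ) ≤ L / 2 := by linarith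
    have hm1 := mul_le_mul_of_nonneg_left hPQ hL2
    have hm2 := mul_nonneg hL2 hQ0
    have hm3 := mul_nonneg hL2 (hd0 1)
    nlinarith [hm1, hm2, hm3]
  have hB0' : 0 ≤ B := le_trans (hd0 1) hB0
  have hLB0 : 0 ≤ L / 2 * B := mul_nonneg (by linarith) hB0'
  have hM0 : 0 ≤ L * (ζ * εbar + σv) / (χ - ℓ) + L * d 1 := by
    apply add_nonneg
    · rw [mul_div_assoc]
      exact mul_nonneg hL.le hQ0
    · exact mul_nonneg hL.le (hd0 1)
  have hT2 : 0 ≤ (‖x 1 - xstar 1‖ + W + ζ * E) / (χ - ℓ) :=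
    div_nonneg (add_nonneg (add_nonneg (norm_nonneg _) hW0) (mul_nonneg hζ0 hE0)) hχℓ.le
  rw [← hdk 1]
  calc ∑ k ∈ Finset.Icc 1 K, (f k (x k) - f k (xstar k)) ≤ (L / 2 * B) * T := hsum1
    _ ≤ (L / 2 * B) * ((‖x 1 - xstar 1‖ + W + ζ * E) / (χ - ℓ)) :=
        mul_le_mul_of_nonneg_left hTle hLB0
    _ ≤ (L * (ζ * εbar + σv) / (χ - ℓ) + L * d 1) *
          ((‖x 1 - xstar 1‖ + W + ζ * E) / (χ - ℓ)) :=
        mul_le_mul_of_nonneg_right hMB hT2
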